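/- If G and H are almost-3-symmetric finite simple graphs, then inflate(G,H) is almost-3-symmetric. -/

import Mathlib

open scoped Classical

/-- The inflation (lexicographic product) of `G` with `H`: vertex set `α × β`,
with `(g₁,h₁) ~ (g₂,h₂)` iff `g₁ ~ g₂` in `G`, or `g₁ = g₂` and `h₁ ~ h₂` in `H`. -/
def inflate {α β : Type*} (G : SimpleGraph α) (H : SimpleGraph β) :
    SimpleGraph (α × β) where
  Adj p q := G.Adj p.1 q.1 ∨ (p.1 = q.1 ∧ H.Adj p.2 q.2)
  symm := by
    constructor
    rintro p q (h | ⟨h1, h2⟩)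
    · exact Or.inl h.symm
    · exact Or.inr ⟨h1.symm, h2.symm⟩
  loopless := by
    constructor
    rintro p (h | ⟨-, h⟩)
    · exact G.irrefl h
    · exact H.irrefl h

/-- The number of edges of a graph. -/
noncomputable def edgeCount {V : Type*} (G : SimpleGraph V) : ℕ :=
  Nat.card G.edgeSet

/-- Twice the number of edges of `G` inside the vertex subset `s`
(counting ordered adjacent pairs). -/
noncomputable def edgePairsIn {V : Type*} [Fintype V] (G : SimpleGraph V)
    (s : Finset V) : ℕ :=
  ((s ×ˢ s).filter fun p => G.Adj p.1 p.2).card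

/-- The number of 3-element vertex subsets of `G` whose induced subgraph has
exactly `j` edges. -/
noncomputable def tripleCount {V : Type*} [Fintype V] (G : SimpleGraph V) (j : ℕ) : ℕ :=
  ((Finset.powersetCard 3 (Finset.univ : Finset V)).filter
    fun s => edgePairsIn G s = 2 * j).card

/-- `X` is almost-3-symmetric: it is 2-symmetric, its triangle count equals its
empty-triple count, and its induced-`P₃` count equals its one-edge-triple count. -/
def Almost3Sym {V : Type*} [Fintype V] (X : SimpleGraph V) : Prop :=
  2 * edgeCount X = (Fintype.card V).choose 2 ∧
  tripleCount X 3 = tripleCount X 0 ∧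
  tripleCount X 2 = tripleCount X 1

namespace Almost3SymAux

open Finset
variable {V : Type*}
noncomputable def eI (X : SimpleGraph V) (x y : V) : ℕ := if X.Adj x y then 1 else 0
noncomputable def nI (X : SimpleGraph V) (x y : V) : ℕ :=
  if x = y then 0 else if X.Adj x y then 0 else 1
noncomputable def dI (x y : V) : ℕ := if x = y then 0 else 1
lemma eI_symm (X : SimpleGraph V) (x y : V) : eI X x y = eI X y x := by
  simp [eI, SimpleGraph.adj_comm]
lemma eI_self (X : SimpleGraph V) (x : V) : eI X x x = 0 := by simp [eI]
lemma dI_self (x : V) : dI x x = 0 := by simp [dI]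
lemma dI_ne {x y : V} (h : x ≠ y) : dI x y = 1 := by simp [dI, h]
lemma dI_symm (x y : V) : dI x y = dI y x := by
  unfold dI; by_cases h : x = y <;> simp [h, Ne.symm, eq_comm]

lemma dI_add (X : SimpleGraph V) (x y : V) : dI x y = eI X x y + nI X x y := by
  unfold dI eI nI
  by_cases h : x = y
  · subst h; simp
  · simp only [h, if_false]; split <;> simp



variable [Fintype V]

lemma sum_dI_mul (x : V) (f : V → ℕ) :
    ∑ y : V, dI x y * f y = ∑ y ∈ univ.erase x, f y := by
  rw [← Finset.add_sum_erase (univ : Finset V) _ (mem_univ x), dI_self, zero_mul, zero_add]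
  exact Finset.sum_congr rfl fun y hy => by
    rw [dI_ne (Ne.symm (Finset.ne_of_mem_erase hy)), one_mul]

lemma sum_dI_dI_mul {x x' : V} (h : x ≠ x') (f : V → ℕ) :
    ∑ y : V, dI x y * dI x' y * f y = ∑ y ∈ (univ.erase x).erase x', f y := by
  have hx' : x' ∈ univ.erase x := Finset.mem_erase.2 ⟨Ne.symm h, mem_univ x'⟩
  rw [← Finset.add_sum_erase (univ : Finset V) _ (mem_univ x), dI_self, zero_mul, zero_mul,
    zero_add, ← Finset.add_sum_erase _ _ hx', dI_self, mul_zero, zero_mul, zero_add]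
  exact Finset.sum_congr rfl fun y hy => by
    have h1 := Finset.ne_of_mem_erase hy
    have h2 := Finset.ne_of_mem_erase (Finset.mem_of_mem_erase hy)
    rw [dI_ne (Ne.symm h2), dI_ne (Ne.symm h1), one_mul, one_mul]

noncomputable def S3 (X : SimpleGraph V) (j : ℕ) : ℕ :=
  ∑ x : V, ∑ y : V, ∑ z : V,
    dI x y * dI x z * dI y z * (if eI X x y + eI X x z + eI X y z = j then 1 else 0)

lemma S3_erase (X : SimpleGraph V) (j : ℕ) :
    S3 X j = ∑ x : V, ∑ y ∈ univ.erase x, ∑ z ∈ (univ.erase x).erase y,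
      (if eI X x y + eI X x z + eI X y z = j then 1 else 0) := by
  unfold S3
  refine Finset.sum_congr rfl fun x _ => ?_
  have h1 : ∀ y : V, (∑ z : V, dI x y * dI x z * dI y z *
        (if eI X x y + eI X x z + eI X y z = j then 1 else 0))
      = dI x y * ∑ z : V, dI x z * dI y z *
        (if eI X x y + eI X x z + eI X y z = j then 1 else 0) := by
    intro y
    rw [Finset.mul_sum]
    exact Finset.sum_congr rfl fun z _ => by ring
  simp only [h1]
  rw [sum_dI_mul]
  exact Finset.sum_congr rfl fun y hy =>
    sum_dI_dI_mul (Ne.symm (Finset.ne_of_mem_erase hy)) _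


noncomputable def EE (X : SimpleGraph V) : ℕ := ∑ x : V, ∑ y : V, eI X x y
noncomputable def NN (X : SimpleGraph V) : ℕ := ∑ x : V, ∑ y : V, nI X x y

lemma sum_dI : ∑ x : V, ∑ y : V, dI x y = Fintype.card V * (Fintype.card V - 1) := by
  have h : ∀ x : V, ∑ y : V, dI x y = Fintype.card V - 1 := by
    intro x
    rw [← Finset.add_sum_erase (univ : Finset V) _ (mem_univ x), dI_self, zero_add]
    rw [Finset.sum_congr rfl (g := fun _ => (1:ℕ)) fun y hy => by
      simp [dI, (Finset.ne_of_mem_erase hy).symm]]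
    simp [Finset.card_erase_of_mem]
  simp [h, Finset.sum_const, mul_comm]

lemma EE_add_NN (X : SimpleGraph V) :
    EE X + NN X = Fintype.card V * (Fintype.card V - 1) := by
  rw [← sum_dI]
  unfold EE NN
  rw [← Finset.sum_add_distrib]
  refine Finset.sum_congr rfl fun x _ => ?_
  rw [← Finset.sum_add_distrib]
  exact Finset.sum_congr rfl fun y _ => (dI_add X x y).symm


lemma edgePairsIn_eq_sum (X : SimpleGraph V) (s : Finset V) :
    edgePairsIn X s = ∑ x ∈ s, ∑ y ∈ s, eI X x y := by
  unfold edgePairsIn eI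
  rw [Finset.card_filter, Finset.sum_product]
lemma edgePairsIn_triple (X : SimpleGraph V) {x y z : V}
    (hxy : x ≠ y) (hxz : x ≠ z) (hyz : y ≠ z) :
    edgePairsIn X {x, y, z} = 2 * (eI X x y + eI X x z + eI X y z) := by
  have h1 : (x:V) ∉ ({y,z} : Finset V) := by simp [hxy, hxz]
  have h2 : (y:V) ∉ ({z} : Finset V) := by simp [hyz]
  rw [edgePairsIn_eq_sum]
  rw [show ({x, y, z} : Finset V) = insert x (insert y {z}) from rfl]
  simp only [Finset.sum_insert h1, Finset.sum_insert h2, Finset.sum_singleton]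
  rw [eI_self, eI_self, eI_self, eI_symm X y x, eI_symm X z x, eI_symm X z y]
  ring

lemma dI_mul_ite (X : SimpleGraph V) (x y z : V) (j : ℕ) :
    dI x y * dI x z * dI y z * (if eI X x y + eI X x z + eI X y z = j then 1 else 0)
      = if ((x ≠ y ∧ x ≠ z ∧ y ≠ z) ∧ eI X x y + eI X x z + eI X y z = j) then 1 else 0 := by
  unfold dI
  split_ifs <;> simp_all

set_option maxHeartbeats 1000000 in
lemma S3_eq_six_mul (X : SimpleGraph V) (j : ℕ) :
    S3 X j = 6 * tripleCount X j := by
  classical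
  set P : V × V × V → Prop := fun t =>
    (t.1 ≠ t.2.1 ∧ t.1 ≠ t.2.2 ∧ t.2.1 ≠ t.2.2) ∧
      eI X t.1 t.2.1 + eI X t.1 t.2.2 + eI X t.2.1 t.2.2 = j with hP
  have hS : S3 X j = ((univ : Finset (V × V × V)).filter P).card := by
    rw [Finset.card_filter]
    rw [Fintype.sum_prod_type]
    simp only [Fintype.sum_prod_type]
    unfold S3
    exact Finset.sum_congr rfl fun x _ => Finset.sum_congr rfl fun y _ =>
      Finset.sum_congr rfl fun z _ => dI_mul_ite X x y z j
  set T : Finset (Finset V) := (Finset.powersetCard 3 (Finset.univ : Finset V)).filter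
      fun s => edgePairsIn X s = 2 * j with hT
  have hmap : ∀ t ∈ (univ : Finset (V × V × V)).filter P,
      ({t.1, t.2.1, t.2.2} : Finset V) ∈ T := by
    rintro ⟨x, y, z⟩ ht
    simp only [Finset.mem_filter, Finset.mem_univ, true_and, hP] at ht
    obtain ⟨⟨hxy, hxz, hyz⟩, he⟩ := ht
    simp only [hT, Finset.mem_filter, Finset.mem_powersetCard_univ]
    constructor
    · rw [Finset.card_insert_of_notMem (by simp [hxy, hxz]),
        Finset.card_insert_of_notMem (by simp [hyz]), Finset.card_singleton]
    · rw [edgePairsIn_triple X hxy hxz hyz, he]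
  have hfib : ∀ s ∈ T,
      (((univ : Finset (V × V × V)).filter P).filter
        (fun t => ({t.1, t.2.1, t.2.2} : Finset V) = s)).card = 6 := by
    intro s hs
    simp only [hT, Finset.mem_filter, Finset.mem_powersetCard_univ] at hs
    obtain ⟨hcard, hep⟩ := hs
    obtain ⟨x, y, z, hxy, hxz, hyz, rfl⟩ := Finset.card_eq_three.1 hcard
    have hesum : eI X x y + eI X x z + eI X y z = j := by
      rw [edgePairsIn_triple X hxy hxz hyz] at hep
      omega
    have e1 := eI_symm X x y
    have e2 := eI_symm X x z
    have e3 := eI_symm X y z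
    have hset : ∀ a b c : V, a ≠ b → a ≠ c → b ≠ c →
        ({a, b, c} : Finset V) = {x, y, z} →
        eI X a b + eI X a c + eI X b c = j := by
      intro a b c hab hac hbc hs
      have h := edgePairsIn_triple X hab hac hbc
      rw [hs, hep] at h
      omega
    have p1 : ({x,z,y} : Finset V) = {x,y,z} := by ext w; simp; tauto
    have p2 : ({y,x,z} : Finset V) = {x,y,z} := by ext w; simp; tauto
    have p3 : ({y,z,x} : Finset V) = {x,y,z} := by ext w; simp; tauto
    have p4 : ({z,x,y} : Finset V) = {x,y,z} := by ext w; simp; tauto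
    have p5 : ({z,y,x} : Finset V) = {x,y,z} := by ext w; simp; tauto
    have hyx := hxy.symm
    have hzx := hxz.symm
    have hzy := hyz.symm
    have key : (((univ : Finset (V × V × V)).filter P).filter
        (fun t => ({t.1, t.2.1, t.2.2} : Finset V) = ({x,y,z} : Finset V)))
        = {(x,y,z),(x,z,y),(y,x,z),(y,z,x),(z,x,y),(z,y,x)} := by
      ext ⟨a, b, c⟩
      simp only [Finset.mem_filter, Finset.mem_univ, true_and, hP, Finset.mem_insert,
        Finset.mem_singleton, Prod.mk.injEq]
      constructor
      · rintro ⟨⟨⟨hab, hac, hbc⟩, hej⟩, hset3⟩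
        have ha : a ∈ ({x,y,z} : Finset V) := by rw [← hset3]; simp
        have hb : b ∈ ({x,y,z} : Finset V) := by rw [← hset3]; simp
        have hc : c ∈ ({x,y,z} : Finset V) := by rw [← hset3]; simp
        simp only [Finset.mem_insert, Finset.mem_singleton] at ha hb hc
        clear hset3 hej hset hmap hS p1 p2 p3 p4 p5 hep hesum e1 e2 e3 hcard
        clear_value P T
        clear hP hT P T
        rcases ha with rfl | rfl | rfl <;> rcases hb with rfl | rfl | rfl <;>
          rcases hc with rfl | rfl | rfl <;> simp_all
      · rintro (⟨rfl, rfl, rfl⟩ | ⟨rfl, rfl, rfl⟩ | ⟨rfl, rfl, rfl⟩ | ⟨rfl, rfl, rfl⟩ |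
          ⟨rfl, rfl, rfl⟩ | ⟨rfl, rfl, rfl⟩)
        · exact ⟨⟨⟨hxy, hxz, hyz⟩, hset _ _ _ hxy hxz hyz rfl⟩, rfl⟩
        · exact ⟨⟨⟨hxz, hxy, hzy⟩, hset _ _ _ hxz hxy hzy p1⟩, p1⟩
        · exact ⟨⟨⟨hyx, hyz, hxz⟩, hset _ _ _ hyx hyz hxz p2⟩, p2⟩
        · exact ⟨⟨⟨hyz, hyx, hzx⟩, hset _ _ _ hyz hyx hzx p3⟩, p3⟩
        · exact ⟨⟨⟨hzx, hzy, hxy⟩, hset _ _ _ hzx hzy hxy p4⟩, p4⟩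
        · exact ⟨⟨⟨hzy, hzx, hyx⟩, hset _ _ _ hzy hzx hyx p5⟩, p5⟩
    rw [key]
    rw [Finset.card_insert_of_notMem (by simp [Prod.ext_iff, hxy, hxz, hyz, hyx, hzx, hzy]),
      Finset.card_insert_of_notMem (by simp [Prod.ext_iff, hxy, hxz, hyz, hyx, hzx, hzy]),
      Finset.card_insert_of_notMem (by simp [Prod.ext_iff, hxy, hxz, hyz, hyx, hzx, hzy]),
      Finset.card_insert_of_notMem (by simp [Prod.ext_iff, hxy, hxz, hyz, hyx, hzx, hzy]),
      Finset.card_insert_of_notMem (by simp [Prod.ext_iff, hxy, hxz, hyz, hyx, hzx, hzy]),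
      Finset.card_singleton]
  rw [hS, Finset.card_eq_sum_card_fiberwise hmap]
  rw [Finset.sum_congr rfl hfib, Finset.sum_const, smul_eq_mul, mul_comm]
  rfl

lemma EE_eq (X : SimpleGraph V) : EE X = 2 * edgeCount X := by
  have h1 : edgeCount X = X.edgeFinset.card := by
    rw [edgeCount, ← SimpleGraph.coe_edgeFinset, Nat.card_coe_set_eq, Set.ncard_coe_finset]
  rw [h1, SimpleGraph.two_mul_card_edgeFinset]
  rw [EE]
  rw [← Finset.sum_product']
  rw [Finset.card_filter]
  rw [Finset.univ_product_univ]
  rfl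



variable {α β : Type*} [Fintype α] [Fintype β]

noncomputable def QQ (G : SimpleGraph α) (H : SimpleGraph β) (j : ℕ) (g g' : α) : ℕ :=
  ∑ h : β, ∑ h' : β, dI h h' * (if 2 * eI G g g' + eI H h h' = j then 1 else 0)

noncomputable def PP (G : SimpleGraph α) (H : SimpleGraph β) (j : ℕ) : ℕ :=
  ∑ g : α, ∑ g' : α, dI g g' * QQ G H j g g'

lemma factor4 (u : α → α → ℕ) (v : β → β → ℕ) :
    (∑ g : α, ∑ g' : α, u g g') * (∑ h : β, ∑ h' : β, v h h')
      = ∑ g : α, ∑ g' : α, ∑ h : β, ∑ h' : β, u g g' * v h h' := by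
  rw [Finset.sum_mul]
  refine Finset.sum_congr rfl fun g _ => ?_
  rw [Finset.sum_mul]
  refine Finset.sum_congr rfl fun g' _ => ?_
  rw [Finset.mul_sum]
  refine Finset.sum_congr rfl fun h _ => ?_
  rw [Finset.mul_sum]

lemma PP_eq_sum4 (G : SimpleGraph α) (H : SimpleGraph β) (j : ℕ) :
    PP G H j = ∑ g : α, ∑ g' : α, ∑ h : β, ∑ h' : β,
      dI g g' * dI h h' * (if 2 * eI G g g' + eI H h h' = j then 1 else 0) := by
  unfold PP QQ
  refine Finset.sum_congr rfl fun g _ => Finset.sum_congr rfl fun g' _ => ?_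
  rw [Finset.mul_sum]
  refine Finset.sum_congr rfl fun h _ => ?_
  rw [Finset.mul_sum]
  exact Finset.sum_congr rfl fun h' _ => by ring

lemma PP3 (G : SimpleGraph α) (H : SimpleGraph β) :
    PP G H 3 = EE G * EE H := by
  rw [PP_eq_sum4, EE, EE, factor4]
  refine Finset.sum_congr rfl fun g _ => Finset.sum_congr rfl fun g' _ =>
    Finset.sum_congr rfl fun h _ => Finset.sum_congr rfl fun h' _ => ?_
  unfold dI eI
  by_cases hg : g = g' <;> by_cases hh : h = h' <;>
    simp [hg, hh, G.irrefl, H.irrefl] <;> split_ifs <;> simp_all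

lemma PP2 (G : SimpleGraph α) (H : SimpleGraph β) :
    PP G H 2 = EE G * NN H := by
  rw [PP_eq_sum4, EE, NN, factor4]
  refine Finset.sum_congr rfl fun g _ => Finset.sum_congr rfl fun g' _ =>
    Finset.sum_congr rfl fun h _ => Finset.sum_congr rfl fun h' _ => ?_
  unfold dI eI nI
  by_cases hg : g = g' <;> by_cases hh : h = h' <;>
    simp [hg, hh, G.irrefl, H.irrefl] <;> split_ifs <;> simp_all

lemma PP1 (G : SimpleGraph α) (H : SimpleGraph β) :
    PP G H 1 = NN G * EE H := by
  rw [PP_eq_sum4, EE, NN, factor4]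
  refine Finset.sum_congr rfl fun g _ => Finset.sum_congr rfl fun g' _ =>
    Finset.sum_congr rfl fun h _ => Finset.sum_congr rfl fun h' _ => ?_
  unfold dI eI nI
  by_cases hg : g = g' <;> by_cases hh : h = h' <;>
    simp [hg, hh, G.irrefl, H.irrefl] <;> split_ifs <;> simp_all

lemma PP0 (G : SimpleGraph α) (H : SimpleGraph β) :
    PP G H 0 = NN G * NN H := by
  rw [PP_eq_sum4, NN, NN, factor4]
  refine Finset.sum_congr rfl fun g _ => Finset.sum_congr rfl fun g' _ =>
    Finset.sum_congr rfl fun h _ => Finset.sum_congr rfl fun h' _ => ?_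
  unfold dI eI nI
  by_cases hg : g = g' <;> by_cases hh : h = h' <;>
    simp [hg, hh, G.irrefl, H.irrefl] <;> split_ifs <;> simp_all


noncomputable def DD (g g' : α) (h h' : β) : ℕ := if g = g' then dI h h' else 1
noncomputable def EEi (G : SimpleGraph α) (H : SimpleGraph β) (g g' : α) (h h' : β) : ℕ :=
  if g = g' then eI H h h' else eI G g g'

lemma dI_prod (p q : α × β) : dI p q = DD p.1 q.1 p.2 q.2 := by
  unfold DD
  by_cases h : p.1 = q.1
  · simp [h, Prod.ext_iff, dI]
  · simp [h, Prod.ext_iff, dI]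

lemma eI_prod (G : SimpleGraph α) (H : SimpleGraph β) (p q : α × β) :
    eI (inflate G H) p q = EEi G H p.1 q.1 p.2 q.2 := by
  unfold eI EEi inflate
  by_cases h : p.1 = q.1
  · simp only [h, if_pos rfl]
    have : ¬ G.Adj p.1 q.1 := by rw [h]; exact G.irrefl
    simp [this, h, eI]
  · simp [h, eI]

lemma sum6_reorder (f : α → α → α → β → β → β → ℕ) :
    (∑ g1 : α, ∑ h1 : β, ∑ g2 : α, ∑ h2 : β, ∑ g3 : α, ∑ h3 : β, f g1 g2 g3 h1 h2 h3)
    = ∑ g1 : α, ∑ g2 : α, ∑ g3 : α, ∑ h1 : β, ∑ h2 : β, ∑ h3 : β, f g1 g2 g3 h1 h2 h3 := by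
  refine Finset.sum_congr rfl fun g1 _ => ?_
  rw [Finset.sum_comm]
  refine Finset.sum_congr rfl fun g2 _ => ?_
  have h1 : (∑ h1 : β, ∑ h2 : β, ∑ g3 : α, ∑ h3 : β, f g1 g2 g3 h1 h2 h3)
      = ∑ h1 : β, ∑ g3 : α, ∑ h2 : β, ∑ h3 : β, f g1 g2 g3 h1 h2 h3 :=
    Finset.sum_congr rfl fun h1 _ => Finset.sum_comm
  rw [h1, Finset.sum_comm]

lemma S3_inflate (G : SimpleGraph α) (H : SimpleGraph β) (j : ℕ) :
    S3 (inflate G H) j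
      = Fintype.card β ^ 3 * S3 G j + Fintype.card α * S3 H j
        + 3 * (Fintype.card β * PP G H j) := by
  set b := Fintype.card β with hb
  set a := Fintype.card α with ha
  have hstep1 : S3 (inflate G H) j
      = ∑ g1 : α, ∑ g2 : α, ∑ g3 : α, ∑ h1 : β, ∑ h2 : β, ∑ h3 : β,
        DD g1 g2 h1 h2 * DD g1 g3 h1 h3 * DD g2 g3 h2 h3 *
          (if EEi G H g1 g2 h1 h2 + EEi G H g1 g3 h1 h3 + EEi G H g2 g3 h2 h3 = j
            then 1 else 0) := by
    rw [← sum6_reorder]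
    unfold S3
    simp only [Fintype.sum_prod_type, dI_prod, eI_prod]
  rw [hstep1]
  set T : α → α → α → ℕ := fun g1 g2 g3 => ∑ h1 : β, ∑ h2 : β, ∑ h3 : β,
      DD g1 g2 h1 h2 * DD g1 g3 h1 h3 * DD g2 g3 h2 h3 *
        (if EEi G H g1 g2 h1 h2 + EEi G H g1 g3 h1 h3 + EEi G H g2 g3 h2 h3 = j
          then 1 else 0) with hT
  have hAAA : ∀ g : α, T g g g = S3 H j := by
    intro g
    rw [hT]
    unfold DD EEi S3
    simp
  have hAAB : ∀ g g3 : α, g ≠ g3 → T g g g3 = b * QQ G H j g g3 := by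
    intro g g3 hne
    rw [hT]
    unfold DD EEi QQ
    simp only [if_pos rfl, if_neg hne, one_mul, mul_one, ite_true]
    have hc : ∀ u v : β, (if eI H u v + eI G g g3 + eI G g g3 = j then (1:ℕ) else 0)
        = if 2 * eI G g g3 + eI H u v = j then 1 else 0 := fun u v => by
      exact if_congr (by omega) rfl rfl
    simp only [hc, Finset.sum_const, Finset.card_univ, smul_eq_mul]
    rw [Finset.mul_sum]
    refine Finset.sum_congr rfl fun u _ => ?_
    rw [Finset.mul_sum]
  have hABA : ∀ g g2 : α, g ≠ g2 → T g g2 g = b * QQ G H j g g2 := by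
    intro g g2 hne
    rw [hT]
    unfold DD EEi QQ
    simp only [if_pos rfl, if_neg hne, if_neg (Ne.symm hne), one_mul, mul_one, ite_true]
    have hc : ∀ u v : β, (if eI G g g2 + eI H u v + eI G g2 g = j then (1:ℕ) else 0)
        = if 2 * eI G g g2 + eI H u v = j then 1 else 0 := fun u v => by
      rw [eI_symm G g2 g]
      exact if_congr (by omega) rfl rfl
    simp only [hc, Finset.sum_const, Finset.card_univ, smul_eq_mul]
    rw [Finset.mul_sum]
  have hABB : ∀ g g2 : α, g ≠ g2 → T g g2 g2 = b * QQ G H j g g2 := by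
    intro g g2 hne
    rw [hT]
    unfold DD EEi QQ
    simp only [if_pos rfl, if_neg hne, one_mul, mul_one, ite_true]
    have hc : ∀ u v : β, (if eI G g g2 + eI G g g2 + eI H u v = j then (1:ℕ) else 0)
        = if 2 * eI G g g2 + eI H u v = j then 1 else 0 := fun u v => by
      exact if_congr (by omega) rfl rfl
    simp only [hc, Finset.sum_const, Finset.card_univ, smul_eq_mul]
    rfl
  have hABC : ∀ g1 g2 g3 : α, g1 ≠ g2 → g1 ≠ g3 → g2 ≠ g3 →
      T g1 g2 g3 = b ^ 3 * (if eI G g1 g2 + eI G g1 g3 + eI G g2 g3 = j then 1 else 0) := by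
    intro g1 g2 g3 h12 h13 h23
    rw [hT]
    unfold DD EEi
    simp only [if_neg h12, if_neg h13, if_neg h23, one_mul]
    simp only [Finset.sum_const, Finset.card_univ, smul_eq_mul]
    ring
  have piece1 : ∀ g1 : α, (∑ g3 : α, T g1 g1 g3)
      = S3 H j + b * ∑ g3 ∈ univ.erase g1, QQ G H j g1 g3 := by
    intro g1
    rw [← Finset.add_sum_erase (univ : Finset α) _ (Finset.mem_univ g1), hAAA g1]
    congr 1
    rw [Finset.mul_sum]
    exact Finset.sum_congr rfl fun g3 hg3 =>
      hAAB g1 g3 (Ne.symm (Finset.ne_of_mem_erase hg3))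
  have piece2 : ∀ g1 g2 : α, g1 ≠ g2 → (∑ g3 : α, T g1 g2 g3)
      = 2 * (b * QQ G H j g1 g2)
        + b ^ 3 * ∑ g3 ∈ (univ.erase g1).erase g2,
            (if eI G g1 g2 + eI G g1 g3 + eI G g2 g3 = j then 1 else 0) := by
    intro g1 g2 hne
    have hg2 : g2 ∈ univ.erase g1 := Finset.mem_erase.2 ⟨Ne.symm hne, Finset.mem_univ g2⟩
    rw [← Finset.add_sum_erase (univ : Finset α) _ (Finset.mem_univ g1),
      ← Finset.add_sum_erase _ _ hg2, hABA g1 g2 hne, hABB g1 g2 hne]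
    rw [Finset.sum_congr rfl (fun g3 hg3 => hABC g1 g2 g3 hne
      (Ne.symm (Finset.ne_of_mem_erase (Finset.mem_of_mem_erase hg3)))
      (Ne.symm (Finset.ne_of_mem_erase hg3))), ← Finset.mul_sum]
    ring
  have hPP : PP G H j = ∑ g : α, ∑ g' ∈ univ.erase g, QQ G H j g g' := by
    unfold PP
    exact Finset.sum_congr rfl fun g _ => sum_dI_mul g _
  calc (∑ g1 : α, ∑ g2 : α, ∑ g3 : α, T g1 g2 g3)
      = ∑ g1 : α, ((∑ g3 : α, T g1 g1 g3) + ∑ g2 ∈ univ.erase g1, ∑ g3 : α, T g1 g2 g3) :=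
        Finset.sum_congr rfl fun g1 _ =>
          (Finset.add_sum_erase (univ : Finset α) _ (Finset.mem_univ g1)).symm
    _ = ∑ g1 : α, (S3 H j + b * (∑ g3 ∈ univ.erase g1, QQ G H j g1 g3)
          + ∑ g2 ∈ univ.erase g1, (2 * (b * QQ G H j g1 g2)
            + b ^ 3 * ∑ g3 ∈ (univ.erase g1).erase g2,
                (if eI G g1 g2 + eI G g1 g3 + eI G g2 g3 = j then 1 else 0))) := by
        refine Finset.sum_congr rfl fun g1 _ => ?_
        rw [piece1 g1]
        congr 1
        exact Finset.sum_congr rfl fun g2 hg2 =>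
          piece2 g1 g2 (Ne.symm (Finset.ne_of_mem_erase hg2))
    _ = a * S3 H j + b * PP G H j + (2 * (b * PP G H j) + b ^ 3 * S3 G j) := by
        rw [Finset.sum_add_distrib, Finset.sum_add_distrib, Finset.sum_const,
          Finset.card_univ, smul_eq_mul, ← Finset.mul_sum, ← hPP]
        congr 1
        have : ∀ g1 : α, (∑ g2 ∈ univ.erase g1, (2 * (b * QQ G H j g1 g2)
            + b ^ 3 * ∑ g3 ∈ (univ.erase g1).erase g2,
                (if eI G g1 g2 + eI G g1 g3 + eI G g2 g3 = j then 1 else 0)))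
            = 2 * (b * ∑ g2 ∈ univ.erase g1, QQ G H j g1 g2)
              + b ^ 3 * ∑ g2 ∈ univ.erase g1, ∑ g3 ∈ (univ.erase g1).erase g2,
                (if eI G g1 g2 + eI G g1 g3 + eI G g2 g3 = j then 1 else 0) := by
          intro g1
          rw [Finset.sum_add_distrib, ← Finset.mul_sum, ← Finset.mul_sum, ← Finset.mul_sum]
        simp only [this]
        rw [Finset.sum_add_distrib, ← Finset.mul_sum, ← Finset.mul_sum, ← Finset.mul_sum,
          ← hPP, ← S3_erase]
    _ = b ^ 3 * S3 G j + a * S3 H j + 3 * (b * PP G H j) := by ring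


lemma two_mul_choose (n : ℕ) : 2 * n.choose 2 = n * (n - 1) := by
  rcases n with _ | m
  · simp
  · rw [Nat.choose_two_right, Nat.succ_sub_one]
    rw [Nat.mul_div_cancel' ]
    rcases Nat.even_mul_succ_self m with ⟨k, hk⟩
    exact ⟨k, by rw [mul_comm (m+1) m, hk]; ring⟩

lemma choose_arith (a b : ℕ) :
    a * b.choose 2 + b ^ 2 * a.choose 2 = (a * b).choose 2 := by
  refine Nat.eq_of_mul_eq_mul_left (show 0 < 2 by norm_num) ?_
  rw [two_mul_choose]
  rcases a with _ | a'
  · simp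
  rcases b with _ | b'
  · simp
  have h1 : (a' + 1) * (b' + 1) = (a' * b' + a' + b') + 1 := by ring
  rw [h1, Nat.add_sub_cancel]
  have hA : 2 * (a' + 1).choose 2 = (a' + 1) * a' := by
    rw [two_mul_choose, Nat.succ_sub_one]
  have hB : 2 * (b' + 1).choose 2 = (b' + 1) * b' := by
    rw [two_mul_choose, Nat.succ_sub_one]
  calc 2 * ((a' + 1) * (b' + 1).choose 2 + (b' + 1) ^ 2 * (a' + 1).choose 2)
      = (a' + 1) * (2 * (b' + 1).choose 2) + (b' + 1) ^ 2 * (2 * (a' + 1).choose 2) := by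
        ring
    _ = (a' + 1) * ((b' + 1) * b') + (b' + 1) ^ 2 * ((a' + 1) * a') := by rw [hA, hB]
    _ = (a' * b' + a' + b' + 1) * (a' * b' + a' + b') := by ring

lemma sum4_reorder (f : α → α → β → β → ℕ) :
    (∑ g1 : α, ∑ h1 : β, ∑ g2 : α, ∑ h2 : β, f g1 g2 h1 h2)
      = ∑ g1 : α, ∑ g2 : α, ∑ h1 : β, ∑ h2 : β, f g1 g2 h1 h2 :=
  Finset.sum_congr rfl fun g1 _ => Finset.sum_comm

lemma EE_inflate (G : SimpleGraph α) (H : SimpleGraph β) :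
    EE (inflate G H) = Fintype.card α * EE H + Fintype.card β ^ 2 * EE G := by
  have h1 : EE (inflate G H) = ∑ g1 : α, ∑ g2 : α, ∑ h1 : β, ∑ h2 : β,
      EEi G H g1 g2 h1 h2 := by
    rw [← sum4_reorder]
    unfold EE
    simp only [Fintype.sum_prod_type, eI_prod]
  rw [h1]
  have h2 : ∀ g1 g2 : α, (∑ h1 : β, ∑ h2 : β, EEi G H g1 g2 h1 h2)
      = if g1 = g2 then EE H else Fintype.card β ^ 2 * eI G g1 g2 := by
    intro g1 g2
    unfold EEi
    by_cases h : g1 = g2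
    · simp only [h, if_pos rfl]; rfl
    · simp only [if_neg h, Finset.sum_const, Finset.card_univ, smul_eq_mul]
      ring
  simp only [h2]
  have h3 : ∀ g1 : α, (∑ g2 : α, if g1 = g2 then EE H
      else Fintype.card β ^ 2 * eI G g1 g2)
      = EE H + Fintype.card β ^ 2 * ∑ g2 : α, eI G g1 g2 := by
    intro g1
    rw [← Finset.add_sum_erase (univ : Finset α) _ (Finset.mem_univ g1), if_pos rfl]
    congr 1
    rw [Finset.mul_sum, ← Finset.add_sum_erase (univ : Finset α)
      (fun g2 => Fintype.card β ^ 2 * eI G g1 g2) (Finset.mem_univ g1), eI_self, mul_zero,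
      zero_add]
    exact Finset.sum_congr rfl fun g2 hg2 => by
      rw [if_neg (Ne.symm (Finset.ne_of_mem_erase hg2))]
  simp only [h3]
  rw [Finset.sum_add_distrib, Finset.sum_const, Finset.card_univ, smul_eq_mul,
    ← Finset.mul_sum]
  rfl

end Almost3SymAux

open Almost3SymAux in
/-- The inflation of two almost-3-symmetric graphs is almost-3-symmetric. -/
theorem stmt16 {α β : Type*} [Fintype α] [Fintype β]
    (G : SimpleGraph α) (H : SimpleGraph β)
    (hG : Almost3Sym G) (hH : Almost3Sym H) : Almost3Sym (inflate G H) := by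
  obtain ⟨hG1, hG2, hG3⟩ := hG
  obtain ⟨hH1, hH2, hH3⟩ := hH
  have hEEG : EE G = (Fintype.card α).choose 2 := by rw [EE_eq, hG1]
  have hEEH : EE H = (Fintype.card β).choose 2 := by rw [EE_eq, hH1]
  have hNNG : NN G = EE G := by
    have h1 := EE_add_NN G
    have h2 := two_mul_choose (Fintype.card α)
    omega
  have hNNH : NN H = EE H := by
    have h1 := EE_add_NN H
    have h2 := two_mul_choose (Fintype.card β)
    omega
  have hSG30 : S3 G 3 = S3 G 0 := by rw [S3_eq_six_mul, S3_eq_six_mul, hG2]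
  have hSG21 : S3 G 2 = S3 G 1 := by rw [S3_eq_six_mul, S3_eq_six_mul, hG3]
  have hSH30 : S3 H 3 = S3 H 0 := by rw [S3_eq_six_mul, S3_eq_six_mul, hH2]
  have hSH21 : S3 H 2 = S3 H 1 := by rw [S3_eq_six_mul, S3_eq_six_mul, hH3]
  refine ⟨?_, ?_, ?_⟩
  · rw [← EE_eq, EE_inflate, hEEG, hEEH, Fintype.card_prod]
    exact choose_arith (Fintype.card α) (Fintype.card β)
  · have h3 : S3 (inflate G H) 3 = S3 (inflate G H) 0 := by
      rw [S3_inflate, S3_inflate, hSG30, hSH30, PP3, PP0, hNNG, hNNH]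
    rw [S3_eq_six_mul, S3_eq_six_mul] at h3
    omega
  · have h3 : S3 (inflate G H) 2 = S3 (inflate G H) 1 := by
      rw [S3_inflate, S3_inflate, hSG21, hSH21, PP2, PP1, hNNG, hNNH]
    rw [S3_eq_six_mul, S3_eq_six_mul] at h3
    omega
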